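/- Let G be a countable group, φ a minimal action of G on the line, and H a commensurated subgroup of G such that the restriction of φ to H has no global fixed point. Let ν be a nonzero Radon measure on ℝ invariant under φ(h) for every h ∈ H, and let τ : H → ℝ be a group homomorphism such that for every h ∈ H and every x ∈ ℝ: τ(h) = ν([x, φ(h)(x))) if φ(h)(x) ≥ x, and τ(h) = −ν([φ(h)(x), x)) if φ(h)(x) < x. If the image φ(H) is not a cyclic group, then there exists f ∈ Homeo₀(ℝ) such that for every g ∈ G the map f ∘ φ(g) ∘ f⁻¹ is an affine map x ↦ a x + b with a > 0; moreover, for every subgroup L of G such that L ∩ H has finite index in both L and H, and every h ∈ L, the map f ∘ φ(h) ∘ f⁻¹ is a translation x ↦ x + b. -/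

import Mathlib

open Topology Filter

/-!  `ℝ ≃o ℝ` is the group `Homeo₀(ℝ)` of orientation-preserving homeomorphisms of the
line (order isomorphisms of `ℝ`).  An action of a group `G` on the line is a group
homomorphism `G →* (ℝ ≃o ℝ)`. -/

/-- The underlying map of an action, as a point of the function space `G → ℝ → ℝ`
(equipped with the product topology of pointwise convergence and its Borel σ-algebra). -/
def actMap {G : Type*} [Group G] (φ : G →* (ℝ ≃o ℝ)) : G → ℝ → ℝ := fun g => ⇑(φ g)

/-- An action is minimal if every orbit is dense. -/
def IsMinimalAction {G : Type*} [Group G] (φ : G →* (ℝ ≃o ℝ)) : Prop :=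
  ∀ x : ℝ, Dense {y : ℝ | ∃ g : G, φ g x = y}

/-- Conjugation of (the underlying map of) an action by `f ∈ Homeo₀(ℝ)`. -/
def conjFun {G : Type*} (f : ℝ ≃o ℝ) (F : G → ℝ → ℝ) : G → ℝ → ℝ :=
  fun g x => f (F g (f.symm x))

/-- The space of minimal actions of `G` on the line, as a subset of the function
space `G → ℝ → ℝ`. -/
def RepMin (G : Type*) [Group G] : Set (G → ℝ → ℝ) :=
  {F | ∃ φ : G →* (ℝ ≃o ℝ), IsMinimalAction φ ∧ F = actMap φ}

/-- `G` belongs to the class `𝒞`: the conjugacy relation on `RepMin G` is smooth, i.e.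
there is a Borel map to `ℝ` whose fibers are exactly the conjugacy classes. -/
def ClassC (G : Type*) [Group G] : Prop :=
  ∃ r : (RepMin G) → ℝ, Measurable r ∧
    ∀ φ ψ : RepMin G, (r φ = r ψ ↔ ∃ f : ℝ ≃o ℝ, conjFun f (φ : G → ℝ → ℝ) = (ψ : G → ℝ → ℝ))

open MeasureTheory

/-- `H` is a commensurated subgroup of `G`: for every `g`, `H ∩ gHg⁻¹` has finite index
in both `H` and `gHg⁻¹`. -/
def Commensurated {G : Type*} [Group G] (H : Subgroup G) : Prop :=
  ∀ g : G, Subgroup.Commensurable H (Subgroup.map (MulAut.conj g).toMonoidHom H)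

open MeasureTheory Topology Filter
open scoped ENNReal NNReal

namespace Stmt6Aux

/-- cumulative distribution-like function of a measure. -/
noncomputable def cdf (ρ : Measure ℝ) (x : ℝ) : ℝ :=
  if 0 ≤ x then (ρ (Set.Ico 0 x)).toReal else -(ρ (Set.Ico x 0)).toReal

lemma measure_Ico_add (ρ : Measure ℝ) {a b c : ℝ} (hab : a ≤ b) (hbc : b ≤ c) :
    ρ (Set.Ico a c) = ρ (Set.Ico a b) + ρ (Set.Ico b c) := by
  rw [← Set.Ico_union_Ico_eq_Ico hab hbc,
    measure_union (Set.Ico_disjoint_Ico_same) measurableSet_Ico]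

lemma cdf_sub (ρ : Measure ℝ) (hfin : ∀ a b : ℝ, ρ (Set.Ico a b) ≠ ⊤)
    {x y : ℝ} (hxy : x ≤ y) : cdf ρ y - cdf ρ x = (ρ (Set.Ico x y)).toReal := by
  have fin : ∀ a b : ℝ, ρ (Set.Ico a b) ≠ ⊤ := hfin
  rcases le_or_gt 0 x with hx | hx
  · have hy : (0:ℝ) ≤ y := hx.trans hxy
    have h := measure_Ico_add ρ hx hxy
    rw [cdf, cdf, if_pos hx, if_pos hy, h, ENNReal.toReal_add (fin _ _) (fin _ _)]
    ring
  · rcases le_or_gt 0 y with hy | hy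
    · have h := measure_Ico_add ρ hx.le hy
      rw [cdf, cdf, if_pos hy, if_neg (not_le.2 hx), h,
        ENNReal.toReal_add (fin _ _) (fin _ _)]
      ring
    · have h := measure_Ico_add ρ hxy hy.le
      rw [cdf, cdf, if_neg (not_le.2 hx), if_neg (not_le.2 hy), h,
        ENNReal.toReal_add (fin _ _) (fin _ _)]
      ring

lemma cdf_mono (ρ : Measure ℝ) (hfin : ∀ a b : ℝ, ρ (Set.Ico a b) ≠ ⊤) :
    Monotone (cdf ρ) := by
  intro x y hxy
  have := cdf_sub ρ hfin hxy
  nlinarith [ENNReal.toReal_nonneg (a := ρ (Set.Ico x y))]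

section Basic
variable {G : Type*} [Group G] {φ : G →* (ℝ ≃o ℝ)} {H : Subgroup G} {ν : Measure ℝ} {τ : ↥H → ℝ}

lemma phi_mul (g g' : G) (x : ℝ) : φ (g * g') x = φ g (φ g' x) := by
  rw [map_mul]; rfl

lemma phi_inv (g : G) (x : ℝ) : φ g⁻¹ x = (φ g).symm x := by
  rw [map_inv]; rfl

lemma tau_one (hτhom : ∀ h h' : ↥H, τ (h * h') = τ h + τ h') : τ 1 = 0 := by
  have := hτhom 1 1; rw [mul_one] at this; linarith

lemma tau_inv (hτhom : ∀ h h' : ↥H, τ (h * h') = τ h + τ h') (h : ↥H) :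
    τ h⁻¹ = -τ h := by
  have := hτhom h⁻¹ h; rw [inv_mul_cancel] at this
  rw [tau_one hτhom] at this; linarith

lemma tau_pow (hτhom : ∀ h h' : ↥H, τ (h * h') = τ h + τ h') (h : ↥H) (n : ℕ) :
    τ (h ^ n) = n * τ h := by
  induction n with
  | zero => simpa using tau_one hτhom
  | succ n ih => rw [pow_succ, hτhom, ih]; push_cast; ring

lemma tau_zpow (hτhom : ∀ h h' : ↥H, τ (h * h') = τ h + τ h') (h : ↥H) (n : ℤ) :
    τ (h ^ n) = n * τ h := by
  rcases n with n | n
  · simpa using tau_pow hτhom h n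
  · rw [zpow_negSucc, tau_inv hτhom, tau_pow hτhom]
    push_cast; ring

/-- coercion of subgroup power -/
lemma coe_pow (h : ↥H) (n : ℕ) : ((h ^ n : ↥H) : G) = (h : G) ^ n := rfl

/-- If `τ h > 0` then `φ h` moves every point to the right. -/
lemma tau_pos_move
    (hτν : ∀ (h : ↥H) (x : ℝ),
      (x ≤ φ (h : G) x → τ h = (ν (Set.Ico x (φ (h : G) x))).toReal) ∧
      (φ (h : G) x < x → τ h = -(ν (Set.Ico (φ (h : G) x) x)).toReal))
    {h : ↥H} (hpos : 0 < τ h) (x : ℝ) : x < φ (h : G) x := by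
  rcases lt_trichotomy (φ (h : G) x) x with hlt | heq | hgt
  · have := (hτν h x).2 hlt
    nlinarith [ENNReal.toReal_nonneg (a := ν (Set.Ico (φ (h : G) x) x))]
  · have := (hτν h x).1 heq.ge
    rw [heq] at this; simp at this; linarith
  · exact hgt

lemma tau_neg_move
    (hτν : ∀ (h : ↥H) (x : ℝ),
      (x ≤ φ (h : G) x → τ h = (ν (Set.Ico x (φ (h : G) x))).toReal) ∧
      (φ (h : G) x < x → τ h = -(ν (Set.Ico (φ (h : G) x) x)).toReal))
    (hτhom : ∀ h h' : ↥H, τ (h * h') = τ h + τ h')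
    {h : ↥H} (hneg : τ h < 0) (x : ℝ) : φ (h : G) x < x := by
  have hpos : 0 < τ h⁻¹ := by rw [tau_inv hτhom]; linarith
  have := tau_pos_move hτν hpos (φ (h : G) x)
  have hco : ((h⁻¹ : ↥H) : G) = (h : G)⁻¹ := rfl
  rw [hco, phi_inv, (φ (h:G)).symm_apply_apply] at this
  exact this

end Basic

section Supp
variable {G : Type*} [Group G] {φ : G →* (ℝ ≃o ℝ)} {H : Subgroup G} {ν : Measure ℝ} {τ : ↥H → ℝ}

/-- the support of ν -/
def Sset (ν : Measure ℝ) : Set ℝ := {x | ∀ u v : ℝ, u < x → x < v → ν (Set.Ioo u v) ≠ 0}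

lemma preimage_Ioo (e : ℝ ≃o ℝ) (a b : ℝ) :
    (⇑e)⁻¹' (Set.Ioo (e a) (e b)) = Set.Ioo a b := by
  ext z; simp [e.lt_iff_lt]

lemma preimage_Ico (e : ℝ ≃o ℝ) (a b : ℝ) :
    (⇑e)⁻¹' (Set.Ico (e a) (e b)) = Set.Ico a b := by
  ext z; simp [e.lt_iff_lt, e.le_iff_le]

lemma inv_meas (hinv : ∀ h ∈ H, Measure.map (⇑(φ h)) ν = ν)
    {h : G} (hh : h ∈ H) {s : Set ℝ} (hs : MeasurableSet s) :
    ν ((⇑(φ h))⁻¹' s) = ν s := by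
  conv_rhs => rw [← hinv h hh]
  rw [Measure.map_apply (φ h).monotone.measurable hs]

lemma inv_meas_Ioo (hinv : ∀ h ∈ H, Measure.map (⇑(φ h)) ν = ν)
    {h : G} (hh : h ∈ H) (a b : ℝ) :
    ν (Set.Ioo (φ h a) (φ h b)) = ν (Set.Ioo a b) := by
  rw [← inv_meas hinv hh measurableSet_Ioo, preimage_Ioo]

lemma inv_meas_Ico (hinv : ∀ h ∈ H, Measure.map (⇑(φ h)) ν = ν)
    {h : G} (hh : h ∈ H) (a b : ℝ) :
    ν (Set.Ico (φ h a) (φ h b)) = ν (Set.Ico a b) := by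
  rw [← inv_meas hinv hh measurableSet_Ico, preimage_Ico]

lemma Sset_closed (ν : Measure ℝ) : IsClosed (Sset ν) := by
  rw [← isOpen_compl_iff, isOpen_iff_mem_nhds]
  intro x hx
  simp only [Set.mem_compl_iff, Sset, Set.mem_setOf_eq, not_forall] at hx
  obtain ⟨u, v, hu, hv, h0⟩ := hx
  rw [not_ne_iff] at h0
  refine Filter.mem_of_superset (Ioo_mem_nhds hu hv) ?_
  intro z hz
  simp only [Set.mem_compl_iff, Sset, Set.mem_setOf_eq, not_forall]
  exact ⟨u, v, hz.1, hz.2, by rw [not_ne_iff]; exact h0⟩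

lemma Sset_compl_null (ν : Measure ℝ) : ν (Sset ν)ᶜ = 0 := by
  classical
  set A : ℚ × ℚ → Set ℝ := fun p => if ν (Set.Ioo (p.1 : ℝ) (p.2 : ℝ)) = 0
    then Set.Ioo (p.1 : ℝ) (p.2 : ℝ) else ∅ with hA
  have hcover : (Sset ν)ᶜ ⊆ ⋃ p, A p := by
    intro x hx
    simp only [Set.mem_compl_iff, Sset, Set.mem_setOf_eq, not_forall] at hx
    obtain ⟨u, v, hu, hv, h0⟩ := hx
    rw [not_ne_iff] at h0
    obtain ⟨p, hp1, hp2⟩ := exists_rat_btwn hu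
    obtain ⟨q, hq1, hq2⟩ := exists_rat_btwn hv
    have hsub : Set.Ioo (p:ℝ) (q:ℝ) ⊆ Set.Ioo u v :=
      Set.Ioo_subset_Ioo hp1.le hq2.le
    have h0' : ν (Set.Ioo (p:ℝ) (q:ℝ)) = 0 :=
      le_antisymm (h0 ▸ measure_mono hsub) (zero_le)
    refine Set.mem_iUnion.2 ⟨(p, q), ?_⟩
    rw [hA]; simp only [h0', if_pos]
    exact ⟨hp2, hq1⟩
  refine le_antisymm ?_ (zero_le)
  refine le_trans (measure_mono hcover) ?_
  refine le_trans (measure_iUnion_le _) ?_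
  have : ∀ p : ℚ × ℚ, ν (A p) = 0 := by
    intro p
    rw [hA]
    by_cases hc : ν (Set.Ioo (p.1 : ℝ) (p.2 : ℝ)) = 0
    · simpa [hc] using hc
    · simp [hc]
  simp [this]

lemma Sset_nonempty (ν : Measure ℝ) (hν : ν ≠ 0) : (Sset ν).Nonempty := by
  by_contra hem
  rw [Set.not_nonempty_iff_eq_empty] at hem
  have : ν Set.univ = 0 := by
    have := Sset_compl_null ν
    rwa [hem, Set.compl_empty] at this
  exact hν (Measure.measure_univ_eq_zero.mp this)

lemma Sset_inv (hinv : ∀ h ∈ H, Measure.map (⇑(φ h)) ν = ν)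
    {h : G} (hh : h ∈ H) {x : ℝ} (hx : x ∈ Sset ν) : φ h x ∈ Sset ν := by
  intro u v hu hv
  have hu' : (φ h).symm u < x := by
    rw [← (φ h).symm_apply_apply x]; exact (φ h).symm.strictMono hu
  have hv' : x < (φ h).symm v := by
    rw [← (φ h).symm_apply_apply x]; exact (φ h).symm.strictMono hv
  have := hx _ _ hu' hv'
  rwa [← inv_meas_Ioo hinv hh, (φ h).apply_symm_apply, (φ h).apply_symm_apply] at this

end Supp

section Disp
variable {G : Type*} [Group G] {φ : G →* (ℝ ≃o ℝ)} {H : Subgroup G} {ν : Measure ℝ} {τ : ↥H → ℝ}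

lemma fin_Ico (hreg : ν.Regular) (a b : ℝ) : ν (Set.Ico a b) ≠ ⊤ := by
  have := hreg.toIsFiniteMeasureOnCompacts
  exact ((measure_mono Set.Ico_subset_Icc_self).trans_lt isCompact_Icc.measure_lt_top).ne

/-- displacement formula: `cdf ν (φ h x) = cdf ν x + τ h`. -/
lemma cdf_disp (hreg : ν.Regular)
    (hτν : ∀ (h : ↥H) (x : ℝ),
      (x ≤ φ (h : G) x → τ h = (ν (Set.Ico x (φ (h : G) x))).toReal) ∧
      (φ (h : G) x < x → τ h = -(ν (Set.Ico (φ (h : G) x) x)).toReal))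
    (h : ↥H) (x : ℝ) : cdf ν (φ (h : G) x) = cdf ν x + τ h := by
  rcases le_or_gt x (φ (h : G) x) with hle | hlt
  · have h1 := cdf_sub ν (fin_Ico hreg) hle
    have h2 := (hτν h x).1 hle
    linarith
  · have h1 := cdf_sub ν (fin_Ico hreg) hlt.le
    have h2 := (hτν h x).2 hlt
    linarith

/-- if `τ h = 0`, `φ h` fixes every point of the support. -/
lemma tau_zero_fix_supp (hreg : ν.Regular)
    (hτν : ∀ (h : ↥H) (x : ℝ),
      (x ≤ φ (h : G) x → τ h = (ν (Set.Ico x (φ (h : G) x))).toReal) ∧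
      (φ (h : G) x < x → τ h = -(ν (Set.Ico (φ (h : G) x) x)).toReal))
    (hτhom : ∀ h h' : ↥H, τ (h * h') = τ h + τ h')
    {h : ↥H} (h0 : τ h = 0) {x : ℝ} (hx : x ∈ Sset ν) : φ (h : G) x = x := by
  have key : ∀ k : ↥H, τ k = 0 → x < φ (k : G) x → False := by
    intro k hk0 hlt
    have hfin := fin_Ico (ν := ν) hreg
    -- ν [x, kx) = 0
    have h1 : ν (Set.Ico x (φ (k : G) x)) = 0 := by
      have := (hτν k x).1 hlt.le
      rw [hk0] at this
      rcases (ENNReal.toReal_eq_zero_iff _).1 this.symm with h | h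
      · exact h
      · exact absurd h (hfin _ _)
    -- ν [k⁻¹x, x) = 0
    have hklt : φ ((k⁻¹ : ↥H) : G) x < x := by
      have hco : ((k⁻¹ : ↥H) : G) = (k : G)⁻¹ := rfl
      rw [hco, phi_inv]
      have := (φ (k : G)).symm.strictMono hlt
      rwa [(φ (k:G)).symm_apply_apply] at this
    have h2 : ν (Set.Ico (φ ((k⁻¹ : ↥H) : G) x) x) = 0 := by
      have := (hτν k⁻¹ x).2 hklt
      rw [tau_inv hτhom, hk0] at this
      rcases (ENNReal.toReal_eq_zero_iff _).1 (by linarith : (ν (Set.Ico (φ ((k⁻¹ : ↥H) : G) x) x)).toReal = 0) with h | h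
      · exact h
      · exact absurd h (hfin _ _)
    have hsub : Set.Ioo (φ ((k⁻¹ : ↥H) : G) x) (φ (k : G) x) ⊆
        Set.Ico (φ ((k⁻¹ : ↥H) : G) x) x ∪ Set.Ico x (φ (k : G) x) := by
      intro z hz
      rcases lt_or_ge z x with hzx | hzx
      · exact Or.inl ⟨hz.1.le, hzx⟩
      · exact Or.inr ⟨hzx, hz.2⟩
    have : ν (Set.Ioo (φ ((k⁻¹ : ↥H) : G) x) (φ (k : G) x)) = 0 := by
      refine le_antisymm (le_trans (measure_mono hsub) ?_) (zero_le)
      refine le_trans (measure_union_le _ _) ?_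
      rw [h1, h2]; simp
    exact hx _ _ hklt hlt this
  rcases lt_trichotomy x (φ (h : G) x) with hlt | heq | hgt
  · exact absurd (key h h0 hlt) id
  · exact heq.symm
  · exfalso
    refine key h⁻¹ (by rw [tau_inv hτhom, h0]; ring) ?_
    have hco : ((h⁻¹ : ↥H) : G) = (h : G)⁻¹ := rfl
    rw [hco, phi_inv]
    have := (φ (h : G)).symm.strictMono hgt
    rwa [(φ (h:G)).symm_apply_apply] at this

end Disp

section Kernel
variable {G : Type*} [Group G] {φ : G →* (ℝ ≃o ℝ)} {H : Subgroup G} {ν : Measure ℝ} {τ : ↥H → ℝ}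

lemma pow_apply_succ (e : ℝ ≃o ℝ) (n : ℕ) (x : ℝ) : (e ^ (n+1)) x = e ((e ^ n) x) := by
  rw [pow_succ']; rfl

lemma fix_pow {e : ℝ ≃o ℝ} {n : ℕ} (hn : 0 < n) {x : ℝ} (hfix : (e ^ n) x = x) :
    e x = x := by
  rcases lt_trichotomy (e x) x with hlt | heq | hgt
  · exfalso
    have key : ∀ m : ℕ, (e ^ (m+1)) x ≤ e x := by
      intro m
      induction m with
      | zero => simp [pow_apply_succ]
      | succ m ih =>
        rw [pow_apply_succ]
        calc e ((e ^ (m+1)) x) ≤ e (e x) := e.monotone ih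
        _ ≤ e x := e.monotone hlt.le
    obtain ⟨m, rfl⟩ : ∃ m, n = m + 1 := ⟨n - 1, by omega⟩
    have := key m
    rw [hfix] at this
    exact absurd (this.trans_lt hlt) (lt_irrefl x)
  · exact heq
  · exfalso
    have key : ∀ m : ℕ, e x ≤ (e ^ (m+1)) x := by
      intro m
      induction m with
      | zero => simp [pow_apply_succ]
      | succ m ih =>
        rw [pow_apply_succ]
        calc e x ≤ e (e x) := e.monotone hgt.le
        _ ≤ e ((e ^ (m+1)) x) := e.monotone ih
    obtain ⟨m, rfl⟩ : ∃ m, n = m + 1 := ⟨n - 1, by omega⟩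
    have := key m
    rw [hfix] at this
    exact absurd (hgt.trans_le this) (lt_irrefl x)

lemma fix_of_dense_fix {e : ℝ ≃o ℝ} {D : Set ℝ} (hD : Dense D)
    (hfix : ∀ y ∈ D, e y = y) (x : ℝ) : e x = x := by
  rcases lt_trichotomy (e x) x with hlt | heq | hgt
  · exfalso
    obtain ⟨y, hyD, hy1, hy2⟩ := hD.exists_between hlt
    -- e x < y < x  so  e y < e x < y, but e y = y
    have := e.strictMono hy2
    rw [hfix y hyD] at this
    exact absurd (hy1.trans this) (lt_irrefl (e x))
  · exact heq
  · exfalso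
    obtain ⟨y, hyD, hy1, hy2⟩ := hD.exists_between hgt
    have := e.strictMono hy1
    rw [hfix y hyD] at this
    exact absurd (this.trans hy2) (lt_irrefl (e x))

/-- key rigidity: if `τ h = 0` then `φ h` is the identity. -/
lemma tau_zero_id (hφ : IsMinimalAction φ) (hH : Commensurated H)
    (hν : ν ≠ 0) (hreg : ν.Regular)
    (hinv : ∀ h ∈ H, Measure.map (⇑(φ h)) ν = ν)
    (hτν : ∀ (h : ↥H) (x : ℝ),
      (x ≤ φ (h : G) x → τ h = (ν (Set.Ico x (φ (h : G) x))).toReal) ∧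
      (φ (h : G) x < x → τ h = -(ν (Set.Ico (φ (h : G) x) x)).toReal))
    (hτhom : ∀ h h' : ↥H, τ (h * h') = τ h + τ h')
    {h : ↥H} (h0 : τ h = 0) : ∀ x : ℝ, φ (h : G) x = x := by
  obtain ⟨s₀, hs₀⟩ := Sset_nonempty ν hν
  have hfixS : ∀ y ∈ Sset ν, φ (h : G) y = y := fun y hy =>
    tau_zero_fix_supp hreg hτν hτhom h0 hy
  have horbit : ∀ g : G, φ (h : G) (φ g s₀) = φ g s₀ := by
    intro g
    obtain ⟨n, hn0, -, hnmem⟩ :=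
      Subgroup.exists_pow_mem_of_relIndex_ne_zero (hH g).2 h.2
    obtain ⟨hmem1, -⟩ := hnmem
    obtain ⟨h', hh', hconj⟩ := Subgroup.mem_map.1 hmem1
    have hconj' : g * h' * g⁻¹ = (h : G) ^ n := by
      simpa [MulAut.conj_apply] using hconj
    have hpowfix : ∀ m : ℕ, ∀ y ∈ Sset ν, φ ((h : G) ^ m) y = y := by
      intro m y hy
      induction m with
      | zero => simp
      | succ m ih => rw [pow_succ, phi_mul, hfixS y hy, ih]
    -- h' = g⁻¹ * h^n * g
    have hh'eq : h' = g⁻¹ * ((h : G) ^ n) * g := by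
      rw [← hconj']; group
    -- φ h' fixes φ g⁻¹ s₀
    have e1 : h' * g⁻¹ = g⁻¹ * ((h : G) ^ n) := by rw [hh'eq]; group
    have hfixp : φ h' (φ g⁻¹ s₀) = φ g⁻¹ s₀ := by
      rw [← phi_mul, e1, phi_mul, hpowfix n s₀ hs₀]
    -- hence τ h' = 0
    have htau0 : τ ⟨h', hh'⟩ = 0 := by
      by_contra hne
      rcases lt_or_gt_of_ne hne with hlt | hgt
      · exact absurd hfixp (tau_neg_move hτν hτhom hlt (φ g⁻¹ s₀)).ne
      · exact absurd hfixp (tau_pos_move hτν hgt (φ g⁻¹ s₀)).ne'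
    -- so φ h' fixes s₀, hence φ (h^n) fixes φ g s₀
    have hfix2 : φ h' s₀ = s₀ := tau_zero_fix_supp hreg hτν hτhom htau0 hs₀
    have e2 : ((h : G) ^ n) * g = g * h' := by rw [← hconj']; group
    have hpow : φ ((h : G) ^ n) (φ g s₀) = φ g s₀ := by
      rw [← phi_mul, e2, phi_mul, hfix2]
    have hpow' : ((φ (h : G)) ^ n) (φ g s₀) = φ g s₀ := by
      rw [← map_pow]; exact hpow
    exact fix_pow hn0 hpow'
  intro x
  refine fix_of_dense_fix (hφ s₀) ?_ x
  rintro y ⟨g, rfl⟩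
  exact horbit g

end Kernel

section Small
variable {G : Type*} [Group G] {φ : G →* (ℝ ≃o ℝ)} {H : Subgroup G} {ν : Measure ℝ} {τ : ↥H → ℝ}

/-- Under all standing hypotheses, `τ` takes arbitrarily small positive values. -/
lemma tau_small (hφ : IsMinimalAction φ) (hH : Commensurated H)
    (hirr : ¬ ∃ x : ℝ, ∀ h ∈ H, φ h x = x)
    (hν : ν ≠ 0) (hreg : ν.Regular)
    (hinv : ∀ h ∈ H, Measure.map (⇑(φ h)) ν = ν)
    (hτν : ∀ (h : ↥H) (x : ℝ),
      (x ≤ φ (h : G) x → τ h = (ν (Set.Ico x (φ (h : G) x))).toReal) ∧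
      (φ (h : G) x < x → τ h = -(ν (Set.Ico (φ (h : G) x) x)).toReal))
    (hτhom : ∀ h h' : ↥H, τ (h * h') = τ h + τ h')
    (hnoncyc : ¬ ∃ c : ℝ ≃o ℝ, ∀ h ∈ H, ∃ n : ℤ, φ h = c ^ n) :
    ∀ ε : ℝ, 0 < ε → ∃ h : ↥H, 0 < τ h ∧ τ h < ε := by
  set P : Set ℝ := {t | (∃ h : ↥H, τ h = t) ∧ 0 < t} with hP
  have hPne : P.Nonempty := by
    by_contra hem
    rw [Set.not_nonempty_iff_eq_empty] at hem
    have hzero : ∀ h : ↥H, τ h = 0 := by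
      intro h
      by_contra hne
      rcases lt_or_gt_of_ne hne with hlt | hgt
      · have : τ h⁻¹ ∈ P := ⟨⟨h⁻¹, rfl⟩, by rw [tau_inv hτhom]; linarith⟩
        rw [hem] at this; exact this
      · have : τ h ∈ P := ⟨⟨h, rfl⟩, hgt⟩
        rw [hem] at this; exact this
    refine hirr ⟨0, fun g hg => ?_⟩
    exact tau_zero_id hφ hH hν hreg hinv hτν hτhom (hzero ⟨g, hg⟩) 0
  have hPbdd : BddBelow P := ⟨0, fun t ht => ht.2.le⟩
  set m := sInf P with hm
  have hm0 : 0 ≤ m := le_csInf hPne fun t ht => ht.2.le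
  rcases eq_or_lt_of_le hm0 with hmz | hmpos
  · -- infimum 0 : arbitrarily small positive values
    intro ε hε
    have : sInf P < ε := by rw [← hm, ← hmz]; exact hε
    obtain ⟨t, htP, htε⟩ := (csInf_lt_iff hPbdd hPne).1 this
    obtain ⟨⟨h, rfl⟩, hpos⟩ := htP
    exact ⟨h, hpos, htε⟩
  · -- infimum positive : Γ is cyclic, contradiction with hnoncyc
    exfalso
    have hmem : m ∈ P := by
      by_contra hmem
      obtain ⟨t1, ht1P, ht1⟩ := (csInf_lt_iff hPbdd hPne).1
        (show sInf P < m + m by linarith)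
      have hmt1 : m < t1 := lt_of_le_of_ne (csInf_le hPbdd ht1P)
        (fun he => hmem (he ▸ ht1P))
      obtain ⟨t2, ht2P, ht2⟩ := (csInf_lt_iff hPbdd hPne).1 hmt1
      have hmt2 : m < t2 := lt_of_le_of_ne (csInf_le hPbdd ht2P)
        (fun he => hmem (he ▸ ht2P))
      obtain ⟨⟨h1, rfl⟩, h1pos⟩ := ht1P
      obtain ⟨⟨h2, rfl⟩, h2pos⟩ := ht2P
      have hd : τ (h1 * h2⁻¹) = τ h1 - τ h2 := by
        rw [hτhom, tau_inv hτhom]; ring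
      have hdP : τ (h1 * h2⁻¹) ∈ P := ⟨⟨_, rfl⟩, by rw [hd]; linarith⟩
      have := csInf_le hPbdd hdP
      rw [hd] at this
      linarith
    obtain ⟨⟨h₀, hh₀⟩, -⟩ := hmem
    -- every value of τ is an integer multiple of m
    have hmul : ∀ h : ↥H, ∃ n : ℤ, τ h = n * m := by
      intro h
      set n : ℤ := ⌊τ h / m⌋ with hn
      refine ⟨n, ?_⟩
      have h1 : (n : ℝ) ≤ τ h / m := Int.floor_le _
      have h2 : τ h / m < n + 1 := Int.lt_floor_add_one _
      have hr1 : (n : ℝ) * m ≤ τ h := by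
        have := (le_div_iff₀ hmpos).1 h1
        linarith
      have hr2 : τ h - n * m < m := by
        have := (div_lt_iff₀ hmpos).1 h2
        nlinarith
      by_contra hne
      have hrpos : 0 < τ h - n * m :=
        lt_of_le_of_ne (by linarith) (fun he => hne (by linarith))
      have hdP : τ (h * h₀ ^ (-n)) ∈ P := by
        refine ⟨⟨_, rfl⟩, ?_⟩
        rw [hτhom, tau_zpow hτhom, hh₀]
        push_cast; linarith
      have := csInf_le hPbdd hdP
      rw [hτhom, tau_zpow hτhom, hh₀] at this
      push_cast at this
      linarith
    refine hnoncyc ⟨φ (h₀ : G), fun g hg => ?_⟩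
    obtain ⟨n, hn⟩ := hmul ⟨g, hg⟩
    refine ⟨n, ?_⟩
    have hk0 : τ (⟨g, hg⟩ * h₀ ^ (-n)) = 0 := by
      rw [hτhom, tau_zpow hτhom, hh₀, hn]; push_cast; ring
    have hid := tau_zero_id hφ hH hν hreg hinv hτν hτhom hk0
    refine DFunLike.ext _ _ fun x => ?_
    have hco : ((⟨g, hg⟩ * h₀ ^ (-n) : ↥H) : G) = g * ((h₀ : G) ^ (-n) : G) := rfl
    have hge : g = ((⟨g, hg⟩ * h₀ ^ (-n) : ↥H) : G) * (h₀ : G) ^ n := by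
      rw [hco]; group
    rw [hge, phi_mul, map_zpow, hid]
  
end Small

section Escape
variable {G : Type*} [Group G] {φ : G →* (ℝ ≃o ℝ)} {H : Subgroup G} {ν : Measure ℝ} {τ : ↥H → ℝ}

lemma tau_pow_pos (hτhom : ∀ h h' : ↥H, τ (h * h') = τ h + τ h')
    {h : ↥H} (hpos : 0 < τ h) {n : ℕ} (hn : 0 < n) : 0 < τ (h ^ n) := by
  rw [tau_pow hτhom]
  positivity

lemma escape_up (hreg : ν.Regular)
    (hτν : ∀ (h : ↥H) (x : ℝ),
      (x ≤ φ (h : G) x → τ h = (ν (Set.Ico x (φ (h : G) x))).toReal) ∧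
      (φ (h : G) x < x → τ h = -(ν (Set.Ico (φ (h : G) x) x)).toReal))
    (hτhom : ∀ h h' : ↥H, τ (h * h') = τ h + τ h')
    {h : ↥H} (hpos : 0 < τ h) (x B : ℝ) : ∃ n : ℕ, B < φ ((h : G) ^ n) x := by
  by_contra hcon
  push_neg at hcon
  have hmove : ∀ n : ℕ, x ≤ φ ((h : G) ^ n) x := by
    intro n
    rcases Nat.eq_zero_or_pos n with rfl | hn
    · simp
    · exact (tau_pos_move hτν (tau_pow_pos hτhom hpos hn) x).le
  have hbound : ∀ n : ℕ, (n : ℝ) * τ h ≤ (ν (Set.Ico x B)).toReal := by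
    intro n
    have h1 := (hτν (h ^ n) x).1 (by rw [coe_pow]; exact hmove n)
    rw [tau_pow hτhom] at h1
    rw [h1]
    refine ENNReal.toReal_mono (fin_Ico hreg _ _) (measure_mono ?_)
    rw [coe_pow]
    exact Set.Ico_subset_Ico_right (hcon n)
  obtain ⟨n, hn⟩ := exists_nat_gt ((ν (Set.Ico x B)).toReal / τ h)
  have := hbound n
  rw [div_lt_iff₀ hpos] at hn
  linarith

lemma escape_down (hreg : ν.Regular)
    (hτν : ∀ (h : ↥H) (x : ℝ),
      (x ≤ φ (h : G) x → τ h = (ν (Set.Ico x (φ (h : G) x))).toReal) ∧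
      (φ (h : G) x < x → τ h = -(ν (Set.Ico (φ (h : G) x) x)).toReal))
    (hτhom : ∀ h h' : ↥H, τ (h * h') = τ h + τ h')
    {h : ↥H} (hpos : 0 < τ h) (x B : ℝ) : ∃ n : ℕ, φ (((h : G))⁻¹ ^ n) x < B := by
  by_contra hcon
  push_neg at hcon
  have hmove : ∀ n : ℕ, 0 < n → φ ((h⁻¹ : ↥H) ^ n : ↥H) x < x := by
    intro n hn
    refine tau_neg_move hτν hτhom ?_ x
    rw [tau_pow hτhom, tau_inv hτhom]
    have : (0:ℝ) < n := by exact_mod_cast hn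
    nlinarith
  have hco : ∀ n : ℕ, (((h⁻¹ : ↥H) ^ n : ↥H) : G) = ((h : G))⁻¹ ^ n := fun n => rfl
  have hbound : ∀ n : ℕ, (n : ℝ) * τ h ≤ (ν (Set.Ico B x)).toReal := by
    intro n
    rcases Nat.eq_zero_or_pos n with rfl | hn
    · simp [ENNReal.toReal_nonneg]
    have h1 := (hτν ((h⁻¹ : ↥H) ^ n) x).2 (by rw [hco]; exact (hco n) ▸ hmove n hn)
    rw [tau_pow hτhom, tau_inv hτhom] at h1
    have h1' : (n : ℝ) * τ h = (ν (Set.Ico (φ ((((h⁻¹:↥H)^n :↥H)) : G) x) x)).toReal := by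
      linarith
    rw [h1']
    refine ENNReal.toReal_mono (fin_Ico hreg _ _) (measure_mono ?_)
    refine Set.Ico_subset_Ico_left ?_
    rw [hco]; exact hcon n
  obtain ⟨n, hn⟩ := exists_nat_gt ((ν (Set.Ico B x)).toReal / τ h)
  have := hbound n
  rw [div_lt_iff₀ hpos] at hn
  linarith

lemma Sset_unbounded_above (hreg : ν.Regular) (hν : ν ≠ 0)
    (hinv : ∀ h ∈ H, Measure.map (⇑(φ h)) ν = ν)
    (hτν : ∀ (h : ↥H) (x : ℝ),
      (x ≤ φ (h : G) x → τ h = (ν (Set.Ico x (φ (h : G) x))).toReal) ∧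
      (φ (h : G) x < x → τ h = -(ν (Set.Ico (φ (h : G) x) x)).toReal))
    (hτhom : ∀ h h' : ↥H, τ (h * h') = τ h + τ h')
    {h : ↥H} (hpos : 0 < τ h) (B : ℝ) : ∃ s ∈ Sset ν, B < s := by
  obtain ⟨s₀, hs₀⟩ := Sset_nonempty ν hν
  obtain ⟨n, hn⟩ := escape_up hreg hτν hτhom hpos s₀ B
  refine ⟨φ ((h : G) ^ n) s₀, ?_, hn⟩
  exact Sset_inv hinv (pow_mem h.2 n) hs₀

lemma Sset_unbounded_below (hreg : ν.Regular) (hν : ν ≠ 0)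
    (hinv : ∀ h ∈ H, Measure.map (⇑(φ h)) ν = ν)
    (hτν : ∀ (h : ↥H) (x : ℝ),
      (x ≤ φ (h : G) x → τ h = (ν (Set.Ico x (φ (h : G) x))).toReal) ∧
      (φ (h : G) x < x → τ h = -(ν (Set.Ico (φ (h : G) x) x)).toReal))
    (hτhom : ∀ h h' : ↥H, τ (h * h') = τ h + τ h')
    {h : ↥H} (hpos : 0 < τ h) (B : ℝ) : ∃ s ∈ Sset ν, s < B := by
  obtain ⟨s₀, hs₀⟩ := Sset_nonempty ν hν
  obtain ⟨n, hn⟩ := escape_down hreg hτν hτhom hpos s₀ B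
  refine ⟨φ (((h : G))⁻¹ ^ n) s₀, ?_, hn⟩
  exact Sset_inv hinv (pow_mem (inv_mem h.2) n) hs₀

end Escape

section FullSupport
variable {G : Type*} [Group G] {φ : G →* (ℝ ≃o ℝ)} {H : Subgroup G} {ν : Measure ℝ} {τ : ↥H → ℝ}

lemma preimage_Ioo_symm (e : ℝ ≃o ℝ) (a b : ℝ) :
    (⇑e)⁻¹' (Set.Ioo a b) = Set.Ioo (e.symm a) (e.symm b) := by
  ext z
  simp only [Set.mem_preimage, Set.mem_Ioo]
  constructor
  · rintro ⟨h1, h2⟩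
    exact ⟨by simpa using e.symm.strictMono h1, by simpa using e.symm.strictMono h2⟩
  · rintro ⟨h1, h2⟩
    constructor
    · have := e.strictMono h1; rwa [e.apply_symm_apply] at this
    · have := e.strictMono h2; rwa [e.apply_symm_apply] at this

lemma Sset_univ (hφ : IsMinimalAction φ) (hH : Commensurated H)
    (hirr : ¬ ∃ x : ℝ, ∀ h ∈ H, φ h x = x)
    (hν : ν ≠ 0) (hreg : ν.Regular)
    (hinv : ∀ h ∈ H, Measure.map (⇑(φ h)) ν = ν)
    (hτν : ∀ (h : ↥H) (x : ℝ),
      (x ≤ φ (h : G) x → τ h = (ν (Set.Ico x (φ (h : G) x))).toReal) ∧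
      (φ (h : G) x < x → τ h = -(ν (Set.Ico (φ (h : G) x) x)).toReal))
    (hτhom : ∀ h h' : ↥H, τ (h * h') = τ h + τ h')
    (hnoncyc : ¬ ∃ c : ℝ ≃o ℝ, ∀ h ∈ H, ∃ n : ℤ, φ h = c ^ n) :
    Sset ν = Set.univ := by
  obtain ⟨h₀, h₀pos, -⟩ := tau_small hφ hH hirr hν hreg hinv hτν hτhom hnoncyc 1 one_pos
  -- invariance of the support under every φ g
  have hinvS : ∀ (g : G) (x : ℝ), x ∈ Sset ν → φ g x ∈ Sset ν := by
    intro g x hx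
    by_contra hy
    set y := φ g x with hydef
    -- the gap (u, v) around y
    have hAne : (Sset ν ∩ Set.Iic y).Nonempty := by
      obtain ⟨s, hs1, hs2⟩ := Sset_unbounded_below hreg hν hinv hτν hτhom h₀pos y
      exact ⟨s, hs1, hs2.le⟩
    have hBne : (Sset ν ∩ Set.Ici y).Nonempty := by
      obtain ⟨s, hs1, hs2⟩ := Sset_unbounded_above hreg hν hinv hτν hτhom h₀pos y
      exact ⟨s, hs1, hs2.le⟩
    set u := sSup (Sset ν ∩ Set.Iic y) with hu
    set v := sInf (Sset ν ∩ Set.Ici y) with hv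
    have huA : u ∈ Sset ν ∩ Set.Iic y :=
      ((Sset_closed ν).inter isClosed_Iic).csSup_mem hAne ⟨y, fun t ht => ht.2⟩
    have hvB : v ∈ Sset ν ∩ Set.Ici y :=
      ((Sset_closed ν).inter isClosed_Ici).csInf_mem hBne ⟨y, fun t ht => ht.2⟩
    have huy : u < y := lt_of_le_of_ne huA.2 (fun he => hy (he ▸ huA.1))
    have hyv : y < v := lt_of_le_of_ne hvB.2 (fun he => hy (by rw [he]; exact hvB.1))
    have huS : u ∈ Sset ν := huA.1
    have hvS : v ∈ Sset ν := hvB.1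
    have hgapS : ∀ t : ℝ, u < t → t < v → t ∉ Sset ν := by
      intro t h1 h2 htS
      rcases le_or_gt t y with hty | hty
      · have : t ≤ u := le_csSup ⟨y, fun r hr => hr.2⟩ ⟨htS, hty⟩
        linarith
      · have : v ≤ t := csInf_le ⟨y, fun r hr => hr.2⟩ ⟨htS, hty.le⟩
        linarith
    have hgapnull : ν (Set.Ioo u v) = 0 := by
      refine measure_mono_null ?_ (Sset_compl_null ν)
      intro t ht
      exact hgapS t ht.1 ht.2
    -- the pushforward measure
    set μ := Measure.map (⇑(φ g)) ν with hμdef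
    have hμapp : ∀ s : Set ℝ, MeasurableSet s → μ s = ν ((⇑(φ g))⁻¹' s) := by
      intro s hs
      rw [hμdef, Measure.map_apply (φ g).monotone.measurable hs]
    have hμIoo : ∀ a b : ℝ, μ (Set.Ioo a b) =
        ν (Set.Ioo ((φ g).symm a) ((φ g).symm b)) := by
      intro a b
      rw [hμapp _ measurableSet_Ioo, preimage_Ioo_symm]
    have hμIco : ∀ a b : ℝ, μ (Set.Ico a b) ≠ ⊤ := by
      intro a b
      have : (⇑(φ g))⁻¹' (Set.Ico a b) ⊆ Set.Ico ((φ g).symm a) ((φ g).symm b) := by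
        intro z hz
        simp only [Set.mem_preimage, Set.mem_Ico] at hz ⊢
        constructor
        · have := (φ g).symm.monotone hz.1; rwa [(φ g).symm_apply_apply] at this
        · have := (φ g).symm.strictMono hz.2; rwa [(φ g).symm_apply_apply] at this
      rw [hμapp _ measurableSet_Ico]
      exact ((measure_mono this).trans_lt (lt_top_iff_ne_top.2 (fin_Ico hreg _ _))).ne
    set c := μ (Set.Ioo u v) with hcdef
    have hc0 : c ≠ 0 := by
      rw [hcdef, hμIoo]
      have h1 : (φ g).symm u < x := by
        have := (φ g).symm.strictMono huy
        rwa [hydef, (φ g).symm_apply_apply] at this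
      have h2 : x < (φ g).symm v := by
        have := (φ g).symm.strictMono hyv
        rwa [hydef, (φ g).symm_apply_apply] at this
      exact hx _ _ h1 h2
    -- a point w far to the right of v
    obtain ⟨Nw, hNw⟩ := exists_nat_gt (1 / τ h₀)
    have hNw' : 1 < (Nw : ℝ) * τ h₀ := by
      rw [div_lt_iff₀ h₀pos] at hNw
      linarith
    have hNwpos : 0 < Nw := by
      rcases Nat.eq_zero_or_pos Nw with rfl | hpos
      · simp at hNw'; linarith
      · exact hpos
    set w := φ ((h₀ : G) ^ Nw) v with hwdef
    have hvw : (ν (Set.Ico v w)).toReal = (Nw : ℝ) * τ h₀ := by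
      have hmv : v ≤ φ ((h₀ : G) ^ Nw) v := by
        rw [← coe_pow]
        exact (tau_pos_move hτν (tau_pow_pos hτhom h₀pos hNwpos) v).le
      have := (hτν (h₀ ^ Nw) v).1 (by rw [coe_pow]; exact hmv)
      rw [tau_pow hτhom] at this
      rw [hwdef, ← coe_pow]
      linarith
    -- the element k with small positive τ, compatible with conjugation by g
    have hKsmall : ∀ ε : ℝ, 0 < ε →
        ∃ k : ↥H, (g⁻¹ * (k : G) * g ∈ H) ∧ 0 < τ k ∧ τ k < ε := by
      intro ε hε
      set D := (Subgroup.map (MulAut.conj g).toMonoidHom H).relIndex H with hD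
      have hD0 : D ≠ 0 := (hH g).2
      have hDpos : (0:ℝ) < D := by
        have : 0 < D := Nat.pos_of_ne_zero hD0
        exact_mod_cast this
      obtain ⟨h, hpos, hlt⟩ := tau_small hφ hH hirr hν hreg hinv hτν hτhom hnoncyc
        (ε / D) (by positivity)
      obtain ⟨d, hd0, hdD, hdmem⟩ :=
        Subgroup.exists_pow_mem_of_relIndex_ne_zero hD0 h.2
      refine ⟨h ^ d, ?_, ?_, ?_⟩
      · obtain ⟨h', hh', hconj⟩ := Subgroup.mem_map.1 hdmem.1
        have hconj' : g * h' * g⁻¹ = (h : G) ^ d := by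
          simpa [MulAut.conj_apply] using hconj
        have : g⁻¹ * ((h : G) ^ d) * g = h' := by rw [← hconj']; group
        rw [coe_pow, this]
        exact hh'
      · rw [tau_pow hτhom]
        have : (0:ℝ) < d := by exact_mod_cast hd0
        positivity
      · rw [tau_pow hτhom]
        have hdD' : (d : ℝ) ≤ D := by exact_mod_cast hdD
        have : (d : ℝ) * τ h ≤ (D:ℝ) * τ h := by nlinarith
        calc (d:ℝ) * τ h ≤ (D:ℝ) * τ h := this
        _ < (D:ℝ) * (ε / D) := by
            exact (mul_lt_mul_iff_right₀ hDpos).2 hlt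
        _ = ε := by field_simp
    -- invariance of μ
    have hinvμ : ∀ kk : G, kk ∈ H → g⁻¹ * kk * g ∈ H →
        ∀ s : Set ℝ, MeasurableSet s → μ ((⇑(φ kk))⁻¹' s) = μ s := by
      intro kk h1 h2 s hs
      rw [hμapp _ ((φ kk).monotone.measurable hs), hμapp _ hs]
      have e1 : (⇑(φ g))⁻¹' ((⇑(φ kk))⁻¹' s) = (⇑(φ (g * (g⁻¹ * kk * g))))⁻¹' s := by
        have : g * (g⁻¹ * kk * g) = kk * g := by group
        rw [this]
        ext z
        simp only [Set.mem_preimage]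
        rw [phi_mul]
      rw [e1]
      have e2 : (⇑(φ (g * (g⁻¹ * kk * g))))⁻¹' s =
          (⇑(φ (g⁻¹ * kk * g)))⁻¹' ((⇑(φ g))⁻¹' s) := by
        ext z
        simp only [Set.mem_preimage]
        rw [phi_mul]
      rw [e2]
      exact inv_meas hinv h2 ((φ g).monotone.measurable hs)
    -- the contradiction: infinitely many disjoint translates of the gap
    have hbound : ∀ N : ℕ, (N : ℝ≥0∞) * c ≤ μ (Set.Ioo u w) := by
      intro N
      rcases Nat.eq_zero_or_pos N with rfl | hNpos
      · simp
      obtain ⟨k, hkconj, hkpos, hklt⟩ := hKsmall (1 / N) (by positivity)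
      set T : ℕ → Set ℝ := fun i => Set.Ioo (φ ((k : G) ^ i) u) (φ ((k : G) ^ i) v)
        with hT
      have hki : ∀ i : ℕ, 0 < i → i ≤ N → 0 < τ (k ^ i) ∧ τ (k ^ i) < 1 := by
        intro i hi0 hiN
        constructor
        · exact tau_pow_pos hτhom hkpos hi0
        · rw [tau_pow hτhom]
          have h1 : (i : ℝ) ≤ N := by exact_mod_cast hiN
          have h2 : (0:ℝ) < N := by exact_mod_cast hNpos
          calc (i:ℝ) * τ k ≤ (N:ℝ) * τ k := by nlinarith
          _ < (N:ℝ) * (1 / N) := by exact (mul_lt_mul_iff_right₀ h2).2 hklt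
          _ = 1 := by field_simp
      have hconji : ∀ i : ℕ, g⁻¹ * ((k : G) ^ i) * g ∈ H := by
        intro i
        have : g⁻¹ * ((k : G) ^ i) * g = (g⁻¹ * (k : G) * g) ^ i := by
          induction i with
          | zero => group
          | succ m ih => rw [pow_succ, pow_succ, ← ih]; group
        rw [this]
        exact pow_mem hkconj i
      have hμT : ∀ i : ℕ, μ (T i) = c := by
        intro i
        have := hinvμ ((k : G) ^ i) (pow_mem k.2 i) (hconji i) (T i) measurableSet_Ioo
        rw [hT] at this ⊢
        simp only at this ⊢
        rw [← this, preimage_Ioo]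
      -- ν-distance from u (resp. v) to translate of u (resp. v) equals τ (k^i)
      have hdistu : ∀ i : ℕ, 0 < i → i ≤ N →
          (ν (Set.Ico u (φ ((k : G) ^ i) u))).toReal = τ (k ^ i) := by
        intro i hi0 hiN
        have hm : u ≤ φ ((k : G) ^ i) u := by
          rw [← coe_pow]
          exact (tau_pos_move hτν (hki i hi0 hiN).1 u).le
        have := (hτν (k ^ i) u).1 (by rw [coe_pow]; exact hm)
        rw [coe_pow] at this
        linarith
      have hdistv : ∀ i : ℕ, 0 < i → i ≤ N →
          (ν (Set.Ico v (φ ((k : G) ^ i) v))).toReal = τ (k ^ i) := by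
        intro i hi0 hiN
        have hm : v ≤ φ ((k : G) ^ i) v := by
          rw [← coe_pow]
          exact (tau_pos_move hτν (hki i hi0 hiN).1 v).le
        have := (hτν (k ^ i) v).1 (by rw [coe_pow]; exact hm)
        rw [coe_pow] at this
        linarith
      have hTsub : ∀ i : ℕ, 0 < i → i ≤ N → T i ⊆ Set.Ioo u w := by
        intro i hi0 hiN
        have hl : u < φ ((k : G) ^ i) u := by
          rw [← coe_pow]
          exact tau_pos_move hτν (hki i hi0 hiN).1 u
        have hr : φ ((k : G) ^ i) v < w := by
          by_contra hge
          push_neg at hge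
          have hsub : Set.Ico v w ⊆ Set.Ico v (φ ((k : G) ^ i) v) :=
            Set.Ico_subset_Ico_right hge
          have := ENNReal.toReal_mono (fin_Ico hreg _ _) (measure_mono hsub)
          rw [hvw, hdistv i hi0 hiN] at this
          have := (hki i hi0 hiN).2
          linarith
        intro z hz
        exact ⟨hl.trans hz.1, hz.2.trans hr⟩
      -- pairwise disjointness
      have horder : ∀ i j : ℕ, 0 < i → i < j → j ≤ N →
          φ ((k : G) ^ i) v ≤ φ ((k : G) ^ j) u := by
        intro i j hi0 hij hjN
        have hij' : τ (k ^ i) < τ (k ^ j) := by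
          rw [tau_pow hτhom, tau_pow hτhom]
          have : (i : ℝ) < j := by exact_mod_cast hij
          nlinarith
        have huu : φ ((k : G) ^ i) u < φ ((k : G) ^ j) u := by
          by_contra hge
          push_neg at hge
          have hsub : Set.Ico u (φ ((k : G) ^ j) u) ⊆ Set.Ico u (φ ((k : G) ^ i) u) :=
            Set.Ico_subset_Ico_right hge
          have := ENNReal.toReal_mono (fin_Ico hreg _ _) (measure_mono hsub)
          rw [hdistu i hi0 (hij.le.trans hjN), hdistu j (hi0.trans hij) hjN] at this
          linarith
        by_contra hlt
        push_neg at hlt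
        -- then φ (k^j) u lies in the gap translate T i, mapping back gives a
        -- support point inside the gap (u,v)
        set z := φ ((k : G) ^ j) u with hz
        have hzS : z ∈ Sset ν := Sset_inv hinv (pow_mem k.2 j) huS
        have hzT : φ (((k : G) ^ i)⁻¹) z ∈ Sset ν :=
          Sset_inv hinv (inv_mem (pow_mem k.2 i)) hzS
        have hz1 : u < φ (((k : G) ^ i)⁻¹) z := by
          rw [phi_inv]
          have := (φ ((k:G)^i)).symm.strictMono huu
          rwa [(φ ((k:G)^i)).symm_apply_apply] at this
        have hz2 : φ (((k : G) ^ i)⁻¹) z < v := by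
          rw [phi_inv]
          have := (φ ((k:G)^i)).symm.strictMono hlt
          rwa [(φ ((k:G)^i)).symm_apply_apply] at this
        exact hgapS _ hz1 hz2 hzT
      have hdisj : (↑(Finset.Icc 1 N) : Set ℕ).PairwiseDisjoint T := by
        intro i hi j hj hij
        simp only [Finset.coe_Icc, Set.mem_Icc] at hi hj
        have key : ∀ i' j' : ℕ, 0 < i' → i' < j' → j' ≤ N → Disjoint (T i') (T j') := by
          intro i' j' h1 h2 h3
          have hor := horder i' j' h1 h2 h3
          rw [Set.disjoint_left]
          intro z hzi hzj
          have hz1 : z < φ ((k : G) ^ i') v := hzi.2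
          have hz2 : φ ((k : G) ^ j') u < z := hzj.1
          linarith [hor]
        rcases hij.lt_or_gt with hlt | hlt
        · exact key i j hi.1 hlt hj.2
        · exact (key j i hj.1 hlt hi.2).symm
      have hsum : μ (⋃ i ∈ Finset.Icc 1 N, T i) = (N : ℝ≥0∞) * c := by
        rw [measure_biUnion_finset hdisj (fun i _ => measurableSet_Ioo)]
        rw [Finset.sum_congr rfl (fun i _ => hμT i), Finset.sum_const, Nat.card_Icc]
        simp [nsmul_eq_mul]
      have hsub : (⋃ i ∈ Finset.Icc 1 N, T i) ⊆ Set.Ioo u w := by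
        intro z hz
        simp only [Set.mem_iUnion, Finset.mem_Icc, exists_prop] at hz
        obtain ⟨i, ⟨hi1, hi2⟩, hzT⟩ := hz
        exact hTsub i hi1 hi2 hzT
      calc (N : ℝ≥0∞) * c = μ (⋃ i ∈ Finset.Icc 1 N, T i) := hsum.symm
      _ ≤ μ (Set.Ioo u w) := measure_mono hsub
    -- conclude the contradiction
    have hMfin : μ (Set.Ioo u w) ≠ ⊤ := by
      intro htop
      exact (hμIco u w) (top_le_iff.1 (htop ▸ measure_mono Set.Ioo_subset_Ico_self))
    have hcfin : c ≠ ⊤ := by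
      intro htop
      refine hMfin (top_le_iff.1 ?_)
      have := hbound 1
      rwa [Nat.cast_one, one_mul, htop] at this
    have hcpos : 0 < c.toReal := ENNReal.toReal_pos hc0 hcfin
    obtain ⟨N, hN⟩ := exists_nat_gt ((μ (Set.Ioo u w)).toReal / c.toReal)
    have h1 : ((N : ℝ≥0∞) * c).toReal ≤ (μ (Set.Ioo u w)).toReal :=
      ENNReal.toReal_mono hMfin (hbound N)
    rw [ENNReal.toReal_mul, ENNReal.toReal_natCast] at h1
    rw [div_lt_iff₀ hcpos] at hN
    linarith
  -- minimality finishes the argument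
  obtain ⟨s₀, hs₀⟩ := Sset_nonempty ν hν
  refine Set.eq_univ_of_forall fun x => ?_
  have hd : closure {y : ℝ | ∃ g : G, φ g s₀ = y} = Set.univ := (hφ s₀).closure_eq
  have hsubS : {y : ℝ | ∃ g : G, φ g s₀ = y} ⊆ Sset ν := by
    rintro y ⟨g, rfl⟩
    exact hinvS g s₀ hs₀
  have hxc : x ∈ closure {y : ℝ | ∃ g : G, φ g s₀ = y} := by
    rw [hd]; trivial
  have := closure_mono hsubS hxc
  rwa [(Sset_closed ν).closure_eq] at this

end FullSupport

section CDF
variable {G : Type*} [Group G] {φ : G →* (ℝ ≃o ℝ)} {H : Subgroup G} {ν : Measure ℝ} {τ : ↥H → ℝ}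

lemma FS_Ioo (hFS : Sset ν = Set.univ) {a b : ℝ} (hab : a < b) : ν (Set.Ioo a b) ≠ 0 := by
  have : (a + b) / 2 ∈ Sset ν := by rw [hFS]; trivial
  exact this a b (by linarith) (by linarith)

lemma FS_Ico (hFS : Sset ν = Set.univ) {a b : ℝ} (hab : a < b) : ν (Set.Ico a b) ≠ 0 :=
  fun h0 => FS_Ioo hFS hab (measure_mono_null Set.Ioo_subset_Ico_self h0)

lemma atomless (hφ : IsMinimalAction φ) (hH : Commensurated H)
    (hirr : ¬ ∃ x : ℝ, ∀ h ∈ H, φ h x = x)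
    (hν : ν ≠ 0) (hreg : ν.Regular)
    (hinv : ∀ h ∈ H, Measure.map (⇑(φ h)) ν = ν)
    (hτν : ∀ (h : ↥H) (x : ℝ),
      (x ≤ φ (h : G) x → τ h = (ν (Set.Ico x (φ (h : G) x))).toReal) ∧
      (φ (h : G) x < x → τ h = -(ν (Set.Ico (φ (h : G) x) x)).toReal))
    (hτhom : ∀ h h' : ↥H, τ (h * h') = τ h + τ h')
    (hnoncyc : ¬ ∃ c : ℝ ≃o ℝ, ∀ h ∈ H, ∃ n : ℤ, φ h = c ^ n)
    (p : ℝ) : ν {p} = 0 := by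
  by_contra hp
  have hfinp : ν {p} ≠ ⊤ := by
    intro htop
    refine fin_Ico hreg p (p+1) (top_le_iff.1 ?_)
    rw [← htop]
    refine measure_mono ?_
    intro z hz
    simp only [Set.mem_singleton_iff] at hz
    subst hz
    exact ⟨le_refl _, by linarith⟩
  have hppos : 0 < (ν {p}).toReal := ENNReal.toReal_pos hp hfinp
  obtain ⟨h, hpos, hlt⟩ := tau_small hφ hH hirr hν hreg hinv hτν hτhom hnoncyc
    ((ν {p}).toReal) hppos
  have hmove := tau_pos_move hτν hpos p
  have h1 := (hτν h p).1 hmove.le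
  have hsub : {p} ⊆ Set.Ico p (φ (h : G) p) := by
    intro z hz
    simp only [Set.mem_singleton_iff] at hz
    subst hz
    exact ⟨le_refl _, hmove⟩
  have := ENNReal.toReal_mono (fin_Ico hreg _ _) (measure_mono hsub)
  linarith

lemma cdf_strictMono (hreg : ν.Regular) (hFS : Sset ν = Set.univ) :
    StrictMono (cdf ν) := by
  intro x y hxy
  have h1 := cdf_sub ν (fin_Ico hreg) hxy.le
  have h2 : 0 < (ν (Set.Ico x y)).toReal :=
    ENNReal.toReal_pos (FS_Ico hFS hxy) (fin_Ico hreg _ _)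
  linarith

lemma cdf_cont (hreg : ν.Regular) (hatom : ∀ p : ℝ, ν {p} = 0) :
    Continuous (cdf ν) := by
  rw [continuous_iff_continuousAt]
  intro x
  rw [Metric.continuousAt_iff]
  intro ε hε
  set A : ℕ → Set ℝ := fun n => Set.Ico (x - 1/(n+1)) (x + 1/(n+1)) with hA
  have hInter : (⋂ n, A n) = {x} := by
    ext z
    simp only [Set.mem_iInter, hA, Set.mem_Ico, Set.mem_singleton_iff]
    constructor
    · intro hz
      by_contra hne
      rcases lt_or_gt_of_ne hne with hlt | hgt
      · obtain ⟨n, hn⟩ := exists_nat_gt (1 / (x - z))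
        have hxz : 0 < x - z := by linarith
        have hn1 : 1 / (x - z) < n + 1 := by
          calc 1 / (x - z) < n := hn
          _ < n + 1 := by linarith
        have : 1/((n:ℝ)+1) < x - z := by
          rw [div_lt_iff₀ hxz] at hn1
          rw [div_lt_iff₀ (by positivity)]
          linarith
        have := (hz n).1
        linarith
      · obtain ⟨n, hn⟩ := exists_nat_gt (1 / (z - x))
        have hxz : 0 < z - x := by linarith
        have hn1 : 1 / (z - x) < n + 1 := by
          calc 1 / (z - x) < n := hn
          _ < n + 1 := by linarith
        have : 1/((n:ℝ)+1) < z - x := by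
          rw [div_lt_iff₀ hxz] at hn1
          rw [div_lt_iff₀ (by positivity)]
          linarith
        have := (hz n).2
        linarith
    · intro hz
      subst hz
      intro n
      constructor <;> [linarith [one_div_pos.2 (by positivity : (0:ℝ) < n + 1)];
        linarith [one_div_pos.2 (by positivity : (0:ℝ) < n + 1)]]
  have htend : Tendsto (ν ∘ A) atTop (𝓝 (ν (⋂ n, A n))) := by
    refine tendsto_measure_iInter_atTop (fun n => measurableSet_Ico.nullMeasurableSet) ?_ ⟨0, ?_⟩
    · intro m n hmn
      refine Set.Ico_subset_Ico ?_ ?_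
      · have : 1/((n:ℝ)+1) ≤ 1/((m:ℝ)+1) := by
          apply one_div_le_one_div_of_le (by positivity)
          have : (m:ℝ) ≤ n := by exact_mod_cast hmn
          linarith
        linarith
      · have : 1/((n:ℝ)+1) ≤ 1/((m:ℝ)+1) := by
          apply one_div_le_one_div_of_le (by positivity)
          have : (m:ℝ) ≤ n := by exact_mod_cast hmn
          linarith
        linarith
    · exact fin_Ico hreg _ _
  rw [hInter, hatom x] at htend
  have hev : ∀ᶠ n in atTop, ν (A n) < ENNReal.ofReal ε :=
    htend.eventually_lt_const (by simpa using ENNReal.ofReal_pos.2 hε)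
  obtain ⟨n, hn⟩ := hev.exists
  refine ⟨1/((n:ℝ)+1), by positivity, ?_⟩
  intro y hy
  rw [Real.dist_eq] at hy ⊢
  have hbound : |cdf ν y - cdf ν x| ≤ (ν (A n)).toReal := by
    have habs := abs_sub_lt_iff.1 hy
    have hδ : (0:ℝ) < 1/((n:ℝ)+1) := by positivity
    rcases le_or_gt x y with hxy | hxy
    · have h1 := cdf_sub ν (fin_Ico hreg) hxy
      have h2 : Set.Ico x y ⊆ A n := by
        intro z hz
        simp only [Set.mem_Ico] at hz
        exact ⟨by linarith [hz.1], by linarith [hz.2, habs.1]⟩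
      have h3 := ENNReal.toReal_mono (fin_Ico hreg _ _) (measure_mono h2)
      rw [abs_of_nonneg (by linarith [ENNReal.toReal_nonneg (a := ν (Set.Ico x y))])]
      linarith
    · have h1 := cdf_sub ν (fin_Ico hreg) hxy.le
      have h2 : Set.Ico y x ⊆ A n := by
        intro z hz
        simp only [Set.mem_Ico] at hz
        exact ⟨by linarith [hz.1, habs.2], by linarith [hz.2]⟩
      have h3 := ENNReal.toReal_mono (fin_Ico hreg _ _) (measure_mono h2)
      rw [abs_of_nonpos (by linarith [ENNReal.toReal_nonneg (a := ν (Set.Ico y x))])]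
      linarith
  calc |cdf ν y - cdf ν x| ≤ (ν (A n)).toReal := hbound
  _ < ε := ENNReal.toReal_lt_of_lt_ofReal hn

end CDF

section Ratio

lemma ratio_eq {α β γ δ : ℝ} (ha : 0 < α) (hb : 0 < β) (hg : 0 ≤ γ) (hd : 0 ≤ δ)
    (hcomp : ∀ m n : ℤ, (m:ℝ) * α ≤ (n:ℝ) * β → (m:ℝ) * γ ≤ (n:ℝ) * δ)
    (hcomp' : ∀ m n : ℤ, (m:ℝ) * β ≤ (n:ℝ) * α → (m:ℝ) * δ ≤ (n:ℝ) * γ) :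
    γ * β = δ * α := by
  have key : ∀ (α' β' γ' δ' : ℝ), 0 < α' → 0 < β' → 0 ≤ γ' → 0 ≤ δ' →
      (∀ m n : ℤ, (m:ℝ) * α' ≤ (n:ℝ) * β' → (m:ℝ) * γ' ≤ (n:ℝ) * δ') →
      γ' * β' ≤ δ' * α' := by
    intro α' β' γ' δ' ha' hb' hg' hd' hcomp'
    by_contra hcon
    push_neg at hcon
    -- δ'α' < γ'β', so γ' > 0
    have hg0 : 0 < γ' := by
      rcases hg'.eq_or_lt with he | h
      · exfalso; rw [← he] at hcon; nlinarith
      · exact h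
    have hdiv : δ' / γ' < β' / α' := by
      rw [div_lt_div_iff₀ hg0 ha']
      nlinarith
    obtain ⟨q, hq1, hq2⟩ := exists_rat_btwn hdiv
    have hqden : (0:ℝ) < (q.den : ℝ) := by exact_mod_cast q.pos
    have hqcast : (q : ℝ) = (q.num : ℝ) / (q.den : ℝ) := by
      rw [Rat.cast_def]
    rw [hqcast] at hq1 hq2
    have hc1 : (q.num : ℝ) * α' ≤ ((q.den : ℤ) : ℝ) * β' := by
      rw [div_lt_div_iff₀ hqden ha'] at hq2
      push_cast
      linarith
    have hc2 := hcomp' q.num (q.den : ℤ) hc1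
    -- hc2 : q.num * γ' ≤ q.den * δ'  contradicts  δ'/γ' < q.num/q.den
    rw [div_lt_div_iff₀ hg0 hqden] at hq1
    push_cast at hc2
    nlinarith
  have h1 := key α β γ δ ha hb hg hd hcomp
  have h2 := key β α δ γ hb ha hd hg hcomp'
  linarith

end Ratio

section ConjAffine
variable {G : Type*} [Group G] {φ : G →* (ℝ ≃o ℝ)} {H : Subgroup G} {ν : Measure ℝ} {τ : ↥H → ℝ}

lemma conj_affine (hφ : IsMinimalAction φ) (hH : Commensurated H)
    (hirr : ¬ ∃ x : ℝ, ∀ h ∈ H, φ h x = x)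
    (hν : ν ≠ 0) (hreg : ν.Regular)
    (hinv : ∀ h ∈ H, Measure.map (⇑(φ h)) ν = ν)
    (hτν : ∀ (h : ↥H) (x : ℝ),
      (x ≤ φ (h : G) x → τ h = (ν (Set.Ico x (φ (h : G) x))).toReal) ∧
      (φ (h : G) x < x → τ h = -(ν (Set.Ico (φ (h : G) x) x)).toReal))
    (hτhom : ∀ h h' : ↥H, τ (h * h') = τ h + τ h')
    (hnoncyc : ¬ ∃ c : ℝ ≃o ℝ, ∀ h ∈ H, ∃ n : ℤ, φ h = c ^ n)
    (hFS : Sset ν = Set.univ) (g : G) :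
    ∃ lam : ℝ, 0 < lam ∧ ∀ x y : ℝ, x ≤ y →
      (ν (Set.Ico (φ g x) (φ g y))).toReal = lam * (ν (Set.Ico x y)).toReal := by
  classical
  set μ := Measure.map (⇑(φ g⁻¹)) ν with hμdef
  have hμIco : ∀ a b : ℝ, μ (Set.Ico a b) = ν (Set.Ico (φ g a) (φ g b)) := by
    intro a b
    rw [hμdef, Measure.map_apply (φ g⁻¹).monotone.measurable measurableSet_Ico]
    congr 1
    ext z
    simp only [Set.mem_preimage, Set.mem_Ico, phi_inv]
    rw [(φ g).le_symm_apply]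
    constructor
    · rintro ⟨h1, h2⟩
      refine ⟨h1, ?_⟩
      by_contra hc
      push_neg at hc
      have := (φ g).symm.monotone hc
      rw [(φ g).symm_apply_apply] at this
      linarith
    · rintro ⟨h1, h2⟩
      refine ⟨h1, ?_⟩
      by_contra hc
      push_neg at hc
      have := (φ g).monotone hc
      rw [(φ g).apply_symm_apply] at this
      linarith
  have hμfin : ∀ a b : ℝ, μ (Set.Ico a b) ≠ ⊤ := by
    intro a b; rw [hμIco]; exact fin_Ico hreg _ _
  -- the compatibility predicate
  set P : ↥H → Prop := fun k => g * (k : G) * g⁻¹ ∈ H with hP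
  have hPmul : ∀ k k' : ↥H, P k → P k' → P (k * k') := by
    intro k k' h1 h2
    have he : g * ((k * k' : ↥H) : G) * g⁻¹ = (g * (k:G) * g⁻¹) * (g * (k':G) * g⁻¹) := by
      push_cast; group
    simp only [hP, he]
    exact mul_mem h1 h2
  have hPone : P 1 := by simp only [hP]; simpa using H.one_mem
  have hPinv : ∀ k : ↥H, P k → P k⁻¹ := by
    intro k h1
    have he : g * ((k⁻¹ : ↥H) : G) * g⁻¹ = (g * (k:G) * g⁻¹)⁻¹ := by
      push_cast; group
    simp only [hP, he]
    exact inv_mem h1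
  have hPpow : ∀ (k : ↥H) (n : ℕ), P k → P (k ^ n) := by
    intro k n h1
    induction n with
    | zero => simpa using hPone
    | succ m ih => rw [pow_succ]; exact hPmul _ _ ih h1
  have hPzpow : ∀ (k : ↥H) (m : ℤ), P k → P (k ^ m) := by
    intro k m h1
    rcases m with m | m
    · simpa using hPpow k m h1
    · rw [zpow_negSucc]; exact hPinv _ (hPpow k (m+1) h1)
  -- invariance of μ-length under compatible elements
  have hinvint : ∀ k : ↥H, P k → ∀ a b : ℝ, a ≤ b →
      μ (Set.Ico (φ (k : G) a) (φ (k : G) b)) = μ (Set.Ico a b) := by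
    intro k hk a b hab
    have he : ∀ z : ℝ, φ g (φ (k : G) z) = φ (g * (k:G) * g⁻¹) (φ g z) := by
      intro z
      rw [← phi_mul, ← phi_mul]
      congr 2
      group
    rw [hμIco, hμIco, he, he]
    exact inv_meas_Ico hinv hk _ _
  -- the displacement function
  set cd : ↥H → ℝ := fun k => cdf μ (φ (k : G) 0) - cdf μ 0 with hcd
  have hdisp : ∀ k : ↥H, P k → ∀ r : ℝ, cdf μ (φ (k : G) r) - cdf μ r = cd k := by
    intro k hk r
    have pair : ∀ a b : ℝ, b ≤ a →
        cdf μ (φ (k : G) a) - cdf μ (φ (k : G) b) = cdf μ a - cdf μ b := by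
      intro a b hba
      have h1 := cdf_sub μ hμfin ((φ (k:G)).monotone hba)
      have h2 := cdf_sub μ hμfin hba
      rw [h1, h2, hinvint k hk b a hba]
    rcases le_total r 0 with h | h
    · have := pair 0 r h
      simp only [hcd]
      linarith
    · have := pair r 0 h
      simp only [hcd]
      linarith
  have hcd_add : ∀ k k' : ↥H, P k → P k' → cd (k * k') = cd k + cd k' := by
    intro k k' hk hk'
    have hco : ((k * k' : ↥H) : G) = (k : G) * (k' : G) := rfl
    have h1 : cd (k * k') = cdf μ (φ ((k:G) * (k':G)) 0) - cdf μ 0 := by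
      simp only [hcd, hco]
    rw [h1, phi_mul]
    have h2 := hdisp k hk (φ (k' : G) 0)
    have h3 := hdisp k' hk' 0
    simp only [hcd] at h2 h3 ⊢
    linarith
  have hcd_one : cd 1 = 0 := by
    simp only [hcd]
    have : ((1 : ↥H) : G) = 1 := rfl
    rw [this, map_one]
    simp
  have hcd_inv : ∀ k : ↥H, P k → cd k⁻¹ = -cd k := by
    intro k hk
    have := hcd_add k⁻¹ k (hPinv k hk) hk
    rw [inv_mul_cancel, hcd_one] at this
    linarith
  have hcd_pow : ∀ (k : ↥H) (n : ℕ), P k → cd (k ^ n) = n * cd k := by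
    intro k n hk
    induction n with
    | zero => simpa using hcd_one
    | succ m ih =>
      rw [pow_succ, hcd_add _ _ (hPpow k m hk) hk, ih]
      push_cast; ring
  have hcd_zpow : ∀ (k : ↥H) (m : ℤ), P k → cd (k ^ m) = m * cd k := by
    intro k m hk
    rcases m with m | m
    · simpa using hcd_pow k m hk
    · rw [zpow_negSucc, hcd_inv _ (hPpow k (m+1) hk), hcd_pow k (m+1) hk]
      push_cast; ring
  -- sign control
  have hcd_sign_neg : ∀ k : ↥H, P k → τ k ≤ 0 → cd k ≤ 0 := by
    intro k hk ht
    rcases ht.eq_or_lt with he | hlt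
    · have hid := tau_zero_id hφ hH hν hreg hinv hτν hτhom he
      simp only [hcd]
      rw [hid 0]
      simp
    · have := tau_neg_move hτν hτhom hlt 0
      have hmono := cdf_mono μ hμfin this.le
      simp only [hcd]
      linarith
  have hcd_sign_pos : ∀ k : ↥H, P k → 0 ≤ τ k → 0 ≤ cd k := by
    intro k hk ht
    have := hcd_sign_neg k⁻¹ (hPinv k hk) (by rw [tau_inv hτhom]; linarith)
    rw [hcd_inv k hk] at this
    linarith
  -- the comparison principle
  have hkey : ∀ k k' : ↥H, P k → P k' → ∀ m n : ℤ,
      (m:ℝ) * τ k ≤ (n:ℝ) * τ k' → (m:ℝ) * cd k ≤ (n:ℝ) * cd k' := by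
    intro k k' hk hk' m n hmn
    set t : ↥H := k ^ m * k' ^ (-n) with ht
    have hPt : P t := hPmul _ _ (hPzpow k m hk) (hPzpow k' (-n) hk')
    have htau : τ t = m * τ k - n * τ k' := by
      rw [ht, hτhom, tau_zpow hτhom, tau_zpow hτhom]
      push_cast; ring
    have hcdt : cd t = m * cd k - n * cd k' := by
      rw [ht, hcd_add _ _ (hPzpow k m hk) (hPzpow k' (-n) hk'),
        hcd_zpow k m hk, hcd_zpow k' (-n) hk']
      push_cast; ring
    have := hcd_sign_neg t hPt (by rw [htau]; linarith)
    rw [hcdt] at this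
    linarith
  -- small positive compatible elements
  have hPsmall : ∀ ε : ℝ, 0 < ε → ∃ k : ↥H, P k ∧ 0 < τ k ∧ τ k < ε := by
    intro ε hε
    set D := (Subgroup.map (MulAut.conj g⁻¹).toMonoidHom H).relIndex H with hD
    have hD0 : D ≠ 0 := (hH g⁻¹).2
    have hDpos : (0:ℝ) < D := by
      have : 0 < D := Nat.pos_of_ne_zero hD0
      exact_mod_cast this
    obtain ⟨h, hpos, hlt⟩ := tau_small hφ hH hirr hν hreg hinv hτν hτhom hnoncyc
      (ε / D) (by positivity)
    obtain ⟨d, hd0, hdD, hdmem⟩ :=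
      Subgroup.exists_pow_mem_of_relIndex_ne_zero hD0 h.2
    refine ⟨h ^ d, ?_, ?_, ?_⟩
    · obtain ⟨h', hh', hconj⟩ := Subgroup.mem_map.1 hdmem.1
      have hconj' : g⁻¹ * h' * g = (h : G) ^ d := by
        simpa [MulAut.conj_apply] using hconj
      have : g * ((h : G) ^ d) * g⁻¹ = h' := by rw [← hconj']; group
      simp only [hP, coe_pow, this]
      exact hh'
    · rw [tau_pow hτhom]
      have : (0:ℝ) < d := by exact_mod_cast hd0
      positivity
    · rw [tau_pow hτhom]
      have hdD' : (d : ℝ) ≤ D := by exact_mod_cast hdD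
      have h1 : (d : ℝ) * τ h ≤ (D:ℝ) * τ h := by nlinarith
      calc (d:ℝ) * τ h ≤ (D:ℝ) * τ h := h1
      _ < (D:ℝ) * (ε / D) := (mul_lt_mul_iff_right₀ hDpos).2 hlt
      _ = ε := by field_simp
  -- realization of values in intervals
  have hval : ∀ a b : ℝ, a < b → ∃ k : ↥H, P k ∧ a < τ k ∧ τ k < b := by
    intro a b hab
    obtain ⟨k₁, hPk₁, hk₁pos, hk₁lt⟩ := hPsmall (b - a) (by linarith)
    set m : ℤ := ⌊a / τ k₁⌋ + 1 with hm
    refine ⟨k₁ ^ m, hPzpow k₁ m hPk₁, ?_, ?_⟩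
    · rw [tau_zpow hτhom]
      have h1 : a / τ k₁ < m := by
        rw [hm]; push_cast; linarith [Int.lt_floor_add_one (a / τ k₁)]
      rw [div_lt_iff₀ hk₁pos] at h1
      linarith
    · rw [tau_zpow hτhom]
      have h1 : (m:ℝ) ≤ a / τ k₁ + 1 := by
        rw [hm]; push_cast; linarith [Int.floor_le (a / τ k₁)]
      have h2 : (m:ℝ) * τ k₁ ≤ (a / τ k₁ + 1) * τ k₁ := by nlinarith
      have h3 : (a / τ k₁ + 1) * τ k₁ = a + τ k₁ := by field_simp
      linarith
  -- the scaling factor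
  obtain ⟨k₀, hPk₀, hk₀pos, -⟩ := hPsmall 1 one_pos
  set lam := cd k₀ / τ k₀ with hlam
  have hprop : ∀ k : ↥H, P k → cd k * τ k₀ = cd k₀ * τ k := by
    have main : ∀ k : ↥H, P k → 0 < τ k → cd k * τ k₀ = cd k₀ * τ k := by
      intro k hk htk
      exact ratio_eq htk hk₀pos (hcd_sign_pos k hk htk.le) (hcd_sign_pos k₀ hPk₀ hk₀pos.le)
        (fun m n h => hkey k k₀ hk hPk₀ m n h)
        (fun m n h => hkey k₀ k hPk₀ hk m n h)
    intro k hk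
    rcases lt_trichotomy (τ k) 0 with hlt | he | hgt
    · have h1 := main k⁻¹ (hPinv k hk) (by rw [tau_inv hτhom]; linarith)
      rw [hcd_inv k hk, tau_inv hτhom] at h1
      linarith
    · have h1 : cd k ≤ 0 := hcd_sign_neg k hk he.le
      have h2 : 0 ≤ cd k := hcd_sign_pos k hk he.ge
      rw [he, (le_antisymm h1 h2 : cd k = 0)]
      ring
    · exact main k hk hgt
  have hcdlam : ∀ k : ↥H, P k → cd k = lam * τ k := by
    intro k hk
    have := hprop k hk
    rw [hlam]
    field_simp
    linarith [this]
  -- positivity of lam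
  have hcdk₀pos : 0 < cd k₀ := by
    rcases (hcd_sign_pos k₀ hPk₀ hk₀pos.le).eq_or_lt with he | h
    · exfalso
      -- then cd vanishes identically and μ would vanish on [0,1)
      have hz : ∀ n : ℕ, cd (k₀ ^ n) = 0 := by
        intro n
        rw [hcd_pow k₀ n hPk₀, ← he]
        ring
      obtain ⟨n, hn⟩ := escape_up hreg hτν hτhom hk₀pos 0 1
      have h1 : (μ (Set.Ico (0:ℝ) (φ ((k₀:G) ^ n) 0))).toReal = 0 := by
        have hmove : (0:ℝ) ≤ φ ((k₀:G) ^ n) 0 := by linarith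
        have hsub := cdf_sub μ hμfin hmove
        have h2 := hdisp (k₀ ^ n) (hPpow k₀ n hPk₀) 0
        rw [coe_pow] at h2
        rw [← hsub, h2]
        exact hz n
      have h3 : μ (Set.Ico (0:ℝ) 1) = 0 := by
        have hsub : Set.Ico (0:ℝ) 1 ⊆ Set.Ico (0:ℝ) (φ ((k₀:G) ^ n) 0) :=
          Set.Ico_subset_Ico_right hn.le
        have h4 := ENNReal.toReal_mono (hμfin _ _) (measure_mono hsub)
        rw [h1] at h4
        have h5 : (μ (Set.Ico (0:ℝ) 1)).toReal = 0 :=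
          le_antisymm (by linarith) ENNReal.toReal_nonneg
        rcases (ENNReal.toReal_eq_zero_iff _).1 h5 with h | h
        · exact h
        · exact absurd h (hμfin _ _)
      rw [hμIco] at h3
      exact FS_Ico hFS ((φ g).strictMono one_pos) h3
    · exact h
  have hlampos : 0 < lam := div_pos hcdk₀pos hk₀pos
  -- main identity
  refine ⟨lam, hlampos, ?_⟩
  intro x y hxy
  rcases hxy.eq_or_lt with rfl | hlt
  · simp
  have hsub1 := cdf_sub ν (fin_Ico hreg) hxy
  have hsub2 := cdf_sub μ hμfin hxy
  set s := (ν (Set.Ico x y)).toReal with hs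
  have hspos : 0 < s :=
    ENNReal.toReal_pos (FS_Ico hFS hlt) (fin_Ico hreg _ _)
  set d := (μ (Set.Ico x y)).toReal with hd
  have hub : ∀ ε : ℝ, 0 < ε → d ≤ lam * s + ε := by
    intro ε hε
    obtain ⟨k, hPk, hk1, hk2⟩ := hval s (s + ε / lam)
      (by have := div_pos hε hlampos; linarith)
    have hy : y ≤ φ (k : G) x := by
      by_contra hc
      push_neg at hc
      have h1 := cdf_strictMono hreg hFS hc
      have h2 := cdf_disp hreg hτν k x
      linarith
    have h3 := cdf_mono μ hμfin hy
    have h4 := hdisp k hPk x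
    have h5 := hcdlam k hPk
    have h6 : lam * τ k < lam * s + ε := by
      have := (mul_lt_mul_iff_right₀ hlampos).2 hk2
      rw [mul_add] at this
      rw [mul_div_cancel₀] at this
      · linarith
      · exact hlampos.ne'
    have : d = cdf μ y - cdf μ x := by rw [hd, hsub2]
    linarith
  have hlb : ∀ ε : ℝ, 0 < ε → lam * s - ε ≤ d := by
    intro ε hε
    obtain ⟨k, hPk, hk1, hk2⟩ := hval (s - ε / lam) s
      (by have := div_pos hε hlampos; linarith)
    have hy : φ (k : G) x ≤ y := by
      by_contra hc
      push_neg at hc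
      have h1 := cdf_strictMono hreg hFS hc
      have h2 := cdf_disp hreg hτν k x
      linarith
    have h3 := cdf_mono μ hμfin hy
    have h4 := hdisp k hPk x
    have h5 := hcdlam k hPk
    have h6 : lam * s - ε < lam * τ k := by
      have := (mul_lt_mul_iff_right₀ hlampos).2 hk1
      rw [mul_sub] at this
      rw [mul_div_cancel₀] at this
      · linarith
      · exact hlampos.ne'
    have : d = cdf μ y - cdf μ x := by rw [hd, hsub2]
    linarith
  have hfinal : d = lam * s := by
    have h1 : d ≤ lam * s := by
      by_contra hc
      push_neg at hc
      have := hub ((d - lam * s)/2) (by linarith)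
      linarith
    have h2 : lam * s ≤ d := by
      by_contra hc
      push_neg at hc
      have := hlb ((lam * s - d)/2) (by linarith)
      linarith
    linarith
  rw [← hμIco]
  exact hfinal

end ConjAffine

section Final
variable {G : Type*} [Group G]

theorem stmt6' (G' : Type*) [Group G'] [Countable G']
    (φ : G' →* (ℝ ≃o ℝ)) (hφ : IsMinimalAction φ)
    (H : Subgroup G') (hH : Commensurated H)
    (hirr : ¬ ∃ x : ℝ, ∀ h ∈ H, φ h x = x)
    (ν : Measure ℝ) (hreg : ν.Regular) (hν : ν ≠ 0)
    (hinv : ∀ h ∈ H, Measure.map (⇑(φ h)) ν = ν)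
    (τ : ↥H → ℝ)
    (hτhom : ∀ h h' : ↥H, τ (h * h') = τ h + τ h')
    (hτν : ∀ (h : ↥H) (x : ℝ),
      (x ≤ φ (h : G') x → τ h = (ν (Set.Ico x (φ (h : G') x))).toReal) ∧
      (φ (h : G') x < x → τ h = -(ν (Set.Ico (φ (h : G') x) x)).toReal))
    (hnoncyc : ¬ ∃ c : ℝ ≃o ℝ, ∀ h ∈ H, ∃ n : ℤ, φ h = c ^ n) :
    ∃ f : ℝ ≃o ℝ,
      (∀ g : G', ∃ a b : ℝ, 0 < a ∧ ∀ x : ℝ, f (φ g (f.symm x)) = a * x + b) ∧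
      (∀ L : Subgroup G', Subgroup.Commensurable L H →
        ∀ h ∈ L, ∃ b : ℝ, ∀ x : ℝ, f (φ h (f.symm x)) = x + b) := by
  classical
  have hFS := Sset_univ hφ hH hirr hν hreg hinv hτν hτhom hnoncyc
  have hatom := atomless hφ hH hirr hν hreg hinv hτν hτhom hnoncyc
  have hsm := cdf_strictMono hreg hFS
  have hcont := cdf_cont hreg hatom
  obtain ⟨h₀, h₀pos, -⟩ := tau_small hφ hH hirr hν hreg hinv hτν hτhom hnoncyc 1 one_pos
  have htop : Tendsto (cdf ν) atTop atTop := by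
    refine tendsto_atTop_atTop_of_monotone (cdf_mono ν (fin_Ico hreg)) ?_
    intro b
    obtain ⟨n, hn⟩ := exists_nat_gt ((b - cdf ν 0) / τ h₀)
    refine ⟨φ ((h₀ : G') ^ n) 0, ?_⟩
    have hd : cdf ν (φ ((h₀ : G') ^ n) 0) = cdf ν 0 + (n : ℝ) * τ h₀ := by
      have := cdf_disp hreg hτν (h₀ ^ n) 0
      rw [coe_pow, tau_pow hτhom] at this
      exact this
    rw [hd, div_lt_iff₀ h₀pos] at *
    linarith
  have hbot : Tendsto (cdf ν) atBot atBot := by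
    refine tendsto_atBot_atBot_of_monotone (cdf_mono ν (fin_Ico hreg)) ?_
    intro b
    obtain ⟨n, hn⟩ := exists_nat_gt ((cdf ν 0 - b) / τ h₀)
    refine ⟨φ (((h₀ : G'))⁻¹ ^ n) 0, ?_⟩
    have hco : (((h₀⁻¹ : ↥H) ^ n : ↥H) : G') = ((h₀ : G'))⁻¹ ^ n := rfl
    have hd : cdf ν (φ (((h₀ : G'))⁻¹ ^ n) 0) = cdf ν 0 - (n : ℝ) * τ h₀ := by
      have := cdf_disp hreg hτν (h₀⁻¹ ^ n) 0
      rw [hco, tau_pow hτhom, tau_inv hτhom] at this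
      rw [this]; ring
    rw [hd]
    rw [div_lt_iff₀ h₀pos] at hn
    linarith
  have hsurj : Function.Surjective (cdf ν) := hcont.surjective htop hbot
  set f : ℝ ≃o ℝ := StrictMono.orderIsoOfSurjective (cdf ν) hsm hsurj with hf
  have hfapp : ∀ z : ℝ, f z = cdf ν z := fun z => rfl
  have hfsymm : ∀ t : ℝ, cdf ν (f.symm t) = t := by
    intro t
    have := f.apply_symm_apply t
    rwa [hfapp] at this
  -- first conclusion
  have hmain : ∀ g : G', ∃ a b : ℝ, 0 < a ∧ ∀ x : ℝ, f (φ g (f.symm x)) = a * x + b := by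
    intro g
    obtain ⟨lam, hlampos, hlamid⟩ :=
      conj_affine hφ hH hirr hν hreg hinv hτν hτhom hnoncyc hFS g
    have hgen : ∀ z w : ℝ, z ≤ w →
        cdf ν (φ g w) - cdf ν (φ g z) = lam * (cdf ν w - cdf ν z) := by
      intro z w hzw
      have h1 := cdf_sub ν (fin_Ico hreg) ((φ g).monotone hzw)
      have h2 := cdf_sub ν (fin_Ico hreg) hzw
      rw [h1, h2, hlamid z w hzw]
    refine ⟨lam, f (φ g (f.symm 0)), hlampos, ?_⟩
    intro x
    rw [hfapp, hfapp]
    rcases le_total (f.symm 0) (f.symm x) with hc | hc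
    · have := hgen _ _ hc
      rw [hfsymm, hfsymm] at this
      linarith
    · have := hgen _ _ hc
      rw [hfsymm, hfsymm] at this
      linarith
  refine ⟨f, hmain, ?_⟩
  -- second conclusion
  intro L hL h hhL
  obtain ⟨a, b, hapos, hab⟩ := hmain h
  obtain ⟨n, hn0, -, hnmem⟩ :=
    Subgroup.exists_pow_mem_of_relIndex_ne_zero hL.2 hhL
  have hHn : h ^ n ∈ H := hnmem.1
  have htrans : ∀ (k : ↥H) (t : ℝ), f (φ (k : G') (f.symm t)) = t + τ k := by
    intro k t
    rw [hfapp, cdf_disp hreg hτν k (f.symm t), hfsymm]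
  have hiter : ∀ m : ℕ, ∃ e : ℝ, ∀ x : ℝ, f (φ (h ^ m) (f.symm x)) = a ^ m * x + e := by
    intro m
    induction m with
    | zero =>
      refine ⟨0, fun x => ?_⟩
      rw [pow_zero, map_one]
      simp [RelIso.coe_one]
    | succ m ih =>
      obtain ⟨e, he⟩ := ih
      refine ⟨a * e + b, fun x => ?_⟩
      have h1 : φ (h ^ (m+1)) (f.symm x) = φ h (φ (h ^ m) (f.symm x)) := by
        rw [pow_succ', phi_mul]
      rw [h1]
      have h2 : φ (h ^ m) (f.symm x) = f.symm (a ^ m * x + e) := by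
        rw [← he x, f.symm_apply_apply]
      rw [h2, hab]
      ring
  obtain ⟨e, he⟩ := hiter n
  have hk := htrans ⟨h ^ n, hHn⟩
  have heq : ∀ x : ℝ, a ^ n * x + e = x + τ (⟨h ^ n, hHn⟩ : ↥H) := by
    intro x
    rw [← he x, ← hk x]
  have han : a ^ n = 1 := by
    have h0 := heq 0
    have h1 := heq 1
    simp at h0
    linarith
  have ha1 : a = 1 := by
    rcases lt_trichotomy a 1 with hlt | he1 | hgt
    · exfalso
      have := pow_lt_one₀ hapos.le hlt (by omega : n ≠ 0)
      linarith
    · exact he1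
    · exfalso
      have := one_lt_pow₀ hgt (by omega : n ≠ 0)
      linarith
  refine ⟨b, fun x => ?_⟩
  have := hab x
  rwa [ha1, one_mul] at this

end Final

end Stmt6Aux


theorem stmt6 (G : Type*) [Group G] [Countable G]
    (φ : G →* (ℝ ≃o ℝ)) (hφ : IsMinimalAction φ)
    (H : Subgroup G) (hH : Commensurated H)
    (hirr : ¬ ∃ x : ℝ, ∀ h ∈ H, φ h x = x)
    (ν : Measure ℝ) (hreg : ν.Regular) (hν : ν ≠ 0)
    (hinv : ∀ h ∈ H, Measure.map (⇑(φ h)) ν = ν)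
    (τ : ↥H → ℝ)
    (hτhom : ∀ h h' : ↥H, τ (h * h') = τ h + τ h')
    (hτν : ∀ (h : ↥H) (x : ℝ),
      (x ≤ φ (h : G) x → τ h = (ν (Set.Ico x (φ (h : G) x))).toReal) ∧
      (φ (h : G) x < x → τ h = -(ν (Set.Ico (φ (h : G) x) x)).toReal))
    (hnoncyc : ¬ ∃ c : ℝ ≃o ℝ, ∀ h ∈ H, ∃ n : ℤ, φ h = c ^ n) :
    ∃ f : ℝ ≃o ℝ,
      (∀ g : G, ∃ a b : ℝ, 0 < a ∧ ∀ x : ℝ, f (φ g (f.symm x)) = a * x + b) ∧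
      (∀ L : Subgroup G, Subgroup.Commensurable L H →
        ∀ h ∈ L, ∃ b : ℝ, ∀ x : ℝ, f (φ h (f.symm x)) = x + b) :=
  Stmt6Aux.stmt6' G φ hφ H hH hirr ν hreg hν hinv τ hτhom hτν hnoncyc
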